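/- The non-asymptotic minimum average cost to erase information equals the single-letter expression: C*_a(n,ε) = min over RVs X̂ with Y − X − X̂ and I(Y;X̂) ≤ ε/n of E[c(X,X̂)]. -/

import Mathlib

open scoped BigOperators

noncomputable def MI {α β : Type*} [Fintype α] [Fintype β] (p : α → β → ℝ) : ℝ :=
  ∑ a, ∑ b, p a b * Real.log (p a b / ((∑ b', p a b') * (∑ a', p a' b)))

def IsPMF2 {α β : Type*} [Fintype α] [Fintype β] (p : α → β → ℝ) : Prop :=
  (∀ a b, 0 ≤ p a b) ∧ ∑ a, ∑ b, p a b = 1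

def IsChannel {α β : Type*} [Fintype β] (K : α → β → ℝ) : Prop :=
  (∀ a b, 0 ≤ K a b) ∧ ∀ a, ∑ b, K a b = 1

/-- Joint pmf of `(Y^n, X^n, X̂^n)` where `(X_i,Y_i)` are i.i.d. `∼ pxy`
and `X̂^n` is produced from `X^n` by the channel `W`. -/
noncomputable def iidJoint {X Y Xh : Type*} [Fintype X] (n : ℕ) (pxy : X → Y → ℝ)
    (W : (Fin n → X) → (Fin n → Xh) → ℝ) :
    (Fin n → Y) → (Fin n → X) → (Fin n → Xh) → ℝ :=
  fun yn xn zn => (∏ i, pxy (xn i) (yn i)) * W xn zn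

/-- Expected additive cost `E[(1/n) ∑_i c(X_i, X̂_i)]` for the i.i.d. source with
one-letter joint `pxy` and encoder `W`. -/
noncomputable def costn {X Y Xh : Type*} [Fintype X] [Fintype Y] [Fintype Xh] (n : ℕ)
    (pxy : X → Y → ℝ) (W : (Fin n → X) → (Fin n → Xh) → ℝ) (c : X → Xh → ℝ) : ℝ :=
  ∑ xn, ∑ zn, (∏ i, ∑ y, pxy (xn i) y) * W xn zn * ((1 / (n : ℝ)) * ∑ i, c (xn i) (zn i))

/-- Single-letter joint pmf of `(Y, X̂)` under the Markov chain `Y − X − X̂`. -/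
noncomputable def singleYZ {X Y Xh : Type*} [Fintype X] (pxy : X → Y → ℝ)
    (K : X → Xh → ℝ) : Y → Xh → ℝ :=
  fun y z => ∑ x, pxy x y * K x z

/-- Single-letter expected cost `E[c(X, X̂)]`. -/
noncomputable def singleCost {X Y Xh : Type*} [Fintype X] [Fintype Y] [Fintype Xh]
    (pxy : X → Y → ℝ) (K : X → Xh → ℝ) (c : X → Xh → ℝ) : ℝ :=
  ∑ x, ∑ z, (∑ y, pxy x y) * K x z * c x z


section Aux
open Finset


lemma logSum {ι : Type*} (s : Finset ι) (a b : ι → ℝ) (ha : ∀ i ∈ s, 0 ≤ a i)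
    (hb : ∀ i ∈ s, 0 ≤ b i) (hab : ∀ i ∈ s, b i = 0 → a i = 0) :
    (∑ i ∈ s, a i) * Real.log ((∑ i ∈ s, a i) / (∑ i ∈ s, b i)) ≤
      ∑ i ∈ s, a i * Real.log (a i / b i) := by
  classical
  rcases eq_or_lt_of_le (Finset.sum_nonneg ha) with h0 | hApos
  · -- A = 0, all a_i = 0
    have hall : ∀ i ∈ s, a i = 0 :=
      (Finset.sum_eq_zero_iff_of_nonneg ha).mp h0.symm
    rw [← h0]
    simp only [zero_mul]
    apply Finset.sum_nonneg
    intro i hi; rw [hall i hi]; simp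
  · set A := ∑ i ∈ s, a i with hA
    set B := ∑ i ∈ s, b i with hB
    have hBpos : 0 < B := by
      rcases eq_or_lt_of_le (Finset.sum_nonneg hb) with h0b | h
      · exfalso
        have hallb : ∀ i ∈ s, b i = 0 :=
          (Finset.sum_eq_zero_iff_of_nonneg hb).mp h0b.symm
        have : A = 0 := Finset.sum_eq_zero fun i hi => hab i hi (hallb i hi)
        rw [this] at hApos; exact lt_irrefl _ hApos
      · exact h
    set s' := s.filter (fun i => a i ≠ 0) with hs'
    have hsub : s' ⊆ s := Finset.filter_subset _ _
    have hA' : ∑ i ∈ s', a i = A := Finset.sum_filter_ne_zero s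
    have hB' : ∑ i ∈ s', b i ≤ B := by
      apply Finset.sum_le_sum_of_subset_of_nonneg hsub
      intro i hi _; exact hb i hi
    have key : ∀ i ∈ s', a i * Real.log (A / B) ≤
        a i * Real.log (a i / b i) + (A / B) * b i - a i := by
      intro i hi
      have hai : 0 < a i := lt_of_le_of_ne (ha i (hsub hi))
        (Ne.symm (Finset.mem_filter.mp hi).2)
      have hbi : 0 < b i := by
        rcases eq_or_lt_of_le (hb i (hsub hi)) with h0b | h
        · exact absurd (hab i (hsub hi) h0b.symm) (Finset.mem_filter.mp hi).2
        · exact h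
      have ht : 0 < (A * b i) / (B * a i) := by positivity
      have hlog : Real.log ((A * b i) / (B * a i)) ≤ (A * b i) / (B * a i) - 1 :=
        Real.log_le_sub_one_of_pos ht
      have hsplit : Real.log (A / B) = Real.log (a i / b i) +
          Real.log ((A * b i) / (B * a i)) := by
        rw [Real.log_div (ne_of_gt hApos) (ne_of_gt hBpos),
            Real.log_div (ne_of_gt hai) (ne_of_gt hbi),
            Real.log_div (by positivity) (by positivity),
            Real.log_mul (ne_of_gt hApos) (ne_of_gt hbi),
            Real.log_mul (ne_of_gt hBpos) (ne_of_gt hai)]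
        ring
      have h2 : a i * Real.log (A / B) ≤ a i * Real.log (a i / b i) +
          a i * ((A * b i) / (B * a i) - 1) := by
        rw [hsplit, mul_add]
        have := mul_le_mul_of_nonneg_left hlog hai.le
        linarith
      have h3 : a i * ((A * b i) / (B * a i)) = (A / B) * b i := by
        field_simp
      rw [mul_sub, h3] at h2
      linarith
    have hsum : ∑ i ∈ s', a i * Real.log (A / B) ≤
        ∑ i ∈ s', (a i * Real.log (a i / b i) + (A / B) * b i - a i) :=
      Finset.sum_le_sum key
    rw [← Finset.sum_mul, hA'] at hsum
    have hexp : ∑ i ∈ s', (a i * Real.log (a i / b i) + (A / B) * b i - a i)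
        = (∑ i ∈ s', a i * Real.log (a i / b i)) + (A / B) * (∑ i ∈ s', b i) - A := by
      rw [Finset.sum_sub_distrib, Finset.sum_add_distrib, ← Finset.mul_sum, hA']
    rw [hexp] at hsum
    have hfrac : (A / B) * (∑ i ∈ s', b i) ≤ A := by
      calc (A / B) * (∑ i ∈ s', b i) ≤ (A / B) * B :=
            mul_le_mul_of_nonneg_left hB' (by positivity)
        _ = A := by field_simp
    have hfull : ∑ i ∈ s', a i * Real.log (a i / b i) =
        ∑ i ∈ s, a i * Real.log (a i / b i) := by
      rw [hs']
      apply Finset.sum_filter_of_ne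
      intro i _ h h0
      rw [h0] at h; simp at h
    rw [hfull] at hsum
    linarith

lemma gibbs {ι : Type*} (s : Finset ι) (a b : ι → ℝ) (ha : ∀ i ∈ s, 0 ≤ a i)
    (hb : ∀ i ∈ s, 0 ≤ b i) (hab : ∀ i ∈ s, b i = 0 → a i = 0)
    (ha1 : ∑ i ∈ s, a i = 1) (hb1 : ∑ i ∈ s, b i ≤ 1) :
    0 ≤ ∑ i ∈ s, a i * Real.log (a i / b i) := by
  have h := logSum s a b ha hb hab
  rw [ha1, one_mul] at h
  refine le_trans ?_ h
  have hBpos : 0 < ∑ i ∈ s, b i := by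
    rcases eq_or_lt_of_le (Finset.sum_nonneg hb) with h0b | hh
    · exfalso
      have h1 : (1:ℝ) = 0 := by
        rw [← ha1]
        exact Finset.sum_eq_zero fun i hi => hab i hi
          ((Finset.sum_eq_zero_iff_of_nonneg hb).mp h0b.symm i hi)
      norm_num at h1
    · exact hh
  rw [one_div, Real.log_inv, neg_nonneg]
  exact Real.log_nonpos hBpos.le hb1



lemma sum_pi_prod {n : ℕ} {T : Type*} [Fintype T] (f : Fin n → T → ℝ) :
    ∑ xn : Fin n → T, ∏ j, f j (xn j) = ∏ j, ∑ t, f j t := by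
  classical
  rw [Finset.prod_univ_sum, Fintype.piFinset_univ]

lemma sum_pi_prod2 {n : ℕ} {Y Z : Type*} [Fintype Y] [Fintype Z]
    (f : Fin n → Y → Z → ℝ) :
    ∑ yn : Fin n → Y, ∑ zn : Fin n → Z, ∏ j, f j (yn j) (zn j)
      = ∏ j, ∑ y, ∑ z, f j y z := by
  classical
  have h1 : ∑ yn : Fin n → Y, ∑ zn : Fin n → Z, ∏ j, f j (yn j) (zn j)
      = ∑ p : (Fin n → Y) × (Fin n → Z), ∏ j, f j (p.1 j) (p.2 j) := by
    rw [Fintype.sum_prod_type]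
  rw [h1, ← Equiv.sum_comp (Equiv.arrowProdEquivProdArrow (Fin n) (fun _ => Y) (fun _ => Z))
    (fun p => ∏ j, f j (p.1 j) (p.2 j))]
  have h3 : ∑ w : Fin n → Y × Z,
      ∏ j, f j (((Equiv.arrowProdEquivProdArrow (Fin n) (fun _ => Y) (fun _ => Z)) w).1 j)
        (((Equiv.arrowProdEquivProdArrow (Fin n) (fun _ => Y) (fun _ => Z)) w).2 j)
      = ∑ w : Fin n → Y × Z, ∏ j, (fun j (p : Y × Z) => f j p.1 p.2) j (w j) := rfl
  rw [h3, sum_pi_prod (fun j (p : Y × Z) => f j p.1 p.2)]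
  exact Finset.prod_congr rfl fun j _ => Fintype.sum_prod_type _

lemma extract1 {n : ℕ} {T : Type*} [Fintype T] (base : T → ℝ) (g : T → ℝ)
    (hb1 : ∑ t, base t = 1) (i : Fin n) :
    ∑ xn : Fin n → T, (∏ j, base (xn j)) * g (xn i)
      = ∑ t, base t * g t := by
  classical
  calc ∑ xn : Fin n → T, (∏ j, base (xn j)) * g (xn i)
      = ∑ xn : Fin n → T, ∏ j, (if j = i then base (xn j) * g (xn j) else base (xn j)) := by
        refine Finset.sum_congr rfl fun xn _ => ?_
        have hfe : (fun j => if j = i then base (xn j) * g (xn j) else base (xn j))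
            = fun j => base (xn j) * (if j = i then g (xn j) else 1) := by
          funext j; split <;> ring
        rw [hfe, Finset.prod_mul_distrib, Finset.prod_ite_eq' Finset.univ i
          (fun j => g (xn j))]
        simp
    _ = ∏ j, ∑ t, (if j = i then base t * g t else base t) :=
        sum_pi_prod (fun j t => if j = i then base t * g t else base t)
    _ = ∏ j : Fin n, (if j = i then (∑ t, base t * g t) else 1) := by
        refine Finset.prod_congr rfl fun j _ => ?_
        split
        · simp
        · simpa using hb1
    _ = ∑ t, base t * g t := by
        rw [Finset.prod_ite_eq' Finset.univ i (fun _ => ∑ t, base t * g t)]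
        simp

lemma extract2 {n : ℕ} {Y Z : Type*} [Fintype Y] [Fintype Z] (q : Y → Z → ℝ)
    (g : Y → Z → ℝ) (hq1 : ∑ y, ∑ z, q y z = 1) (i : Fin n) :
    ∑ yn : Fin n → Y, ∑ zn : Fin n → Z,
        (∏ j, q (yn j) (zn j)) * g (yn i) (zn i)
      = ∑ y, ∑ z, q y z * g y z := by
  classical
  calc ∑ yn : Fin n → Y, ∑ zn : Fin n → Z, (∏ j, q (yn j) (zn j)) * g (yn i) (zn i)
      = ∑ yn : Fin n → Y, ∑ zn : Fin n → Z,
          ∏ j, (if j = i then q (yn j) (zn j) * g (yn j) (zn j) else q (yn j) (zn j)) := by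
        refine Finset.sum_congr rfl fun yn _ => Finset.sum_congr rfl fun zn _ => ?_
        have hfe : (fun j => if j = i then q (yn j) (zn j) * g (yn j) (zn j)
              else q (yn j) (zn j))
            = fun j => q (yn j) (zn j) * (if j = i then g (yn j) (zn j) else 1) := by
          funext j; split <;> ring
        rw [hfe, Finset.prod_mul_distrib, Finset.prod_ite_eq' Finset.univ i
          (fun j => g (yn j) (zn j))]
        simp
    _ = ∏ j, ∑ y, ∑ z, (if j = i then q y z * g y z else q y z) :=
        sum_pi_prod2 (fun j y z => if j = i then q y z * g y z else q y z)
    _ = ∏ j : Fin n, (if j = i then (∑ y, ∑ z, q y z * g y z) else 1) := by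
        refine Finset.prod_congr rfl fun j _ => ?_
        split
        · simp
        · simpa using hq1
    _ = ∑ y, ∑ z, q y z * g y z := by
        rw [Finset.prod_ite_eq' Finset.univ i (fun _ => ∑ y, ∑ z, q y z * g y z)]
        simp



lemma extract_pi {n : ℕ} {T : Type*} [Fintype T] (f : Fin n → T → ℝ) (g : T → ℝ)
    (i : Fin n) :
    ∑ xn : Fin n → T, (∏ j, f j (xn j)) * g (xn i)
      = (∑ t, f i t * g t) * ∏ j ∈ Finset.univ.erase i, (∑ t, f j t) := by
  classical
  calc ∑ xn : Fin n → T, (∏ j, f j (xn j)) * g (xn i)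
      = ∑ xn : Fin n → T, ∏ j, (if j = i then f j (xn j) * g (xn j) else f j (xn j)) := by
        refine Finset.sum_congr rfl fun xn _ => ?_
        have hfe : (fun j => if j = i then f j (xn j) * g (xn j) else f j (xn j))
            = fun j => f j (xn j) * (if j = i then g (xn j) else 1) := by
          funext j; split <;> ring
        rw [hfe, Finset.prod_mul_distrib, Finset.prod_ite_eq' Finset.univ i
          (fun j => g (xn j))]
        simp
    _ = ∏ j, ∑ t, (if j = i then f j t * g t else f j t) :=
        sum_pi_prod (fun j t => if j = i then f j t * g t else f j t)
    _ = (∑ t, f i t * g t) * ∏ j ∈ Finset.univ.erase i, (∑ t, f j t) := by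
        rw [← Finset.mul_prod_erase Finset.univ _ (Finset.mem_univ i)]
        simp only [if_pos rfl]
        congr 1
        refine Finset.prod_congr rfl fun j hj => ?_
        refine Finset.sum_congr rfl fun t _ => ?_
        rw [if_neg (Finset.mem_erase.mp hj).1]

lemma extract_erase {n : ℕ} {T : Type*} [Fintype T] (base : T → ℝ) (g : T → ℝ)
    (i : Fin n) :
    ∑ xn : Fin n → T, (∏ j ∈ Finset.univ.erase i, base (xn j)) * g (xn i)
      = (∑ t, g t) * ∏ j ∈ Finset.univ.erase i, (∑ t, base t) := by
  classical
  calc ∑ xn : Fin n → T, (∏ j ∈ Finset.univ.erase i, base (xn j)) * g (xn i)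
      = ∑ xn : Fin n → T, ∏ j, (if j = i then g (xn j) else base (xn j)) := by
        refine Finset.sum_congr rfl fun xn _ => ?_
        rw [← Finset.mul_prod_erase Finset.univ
          (fun j => if j = i then g (xn j) else base (xn j)) (Finset.mem_univ i)]
        simp only [if_pos rfl]
        rw [mul_comm]
        congr 1
        refine Finset.prod_congr rfl fun j hj => ?_
        rw [if_neg (Finset.mem_erase.mp hj).1]
    _ = ∏ j, ∑ t, (if j = i then g t else base t) :=
        sum_pi_prod (fun j t => if j = i then g t else base t)
    _ = (∑ t, g t) * ∏ j ∈ Finset.univ.erase i, (∑ t, base t) := by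
        rw [← Finset.mul_prod_erase Finset.univ _ (Finset.mem_univ i)]
        simp only [if_pos rfl]
        congr 1
        refine Finset.prod_congr rfl fun j hj => ?_
        refine Finset.sum_congr rfl fun t _ => ?_
        rw [if_neg (Finset.mem_erase.mp hj).1]



lemma sum4_comm {A B C D : Type*} [Fintype A] [Fintype B] [Fintype C] [Fintype D]
    (f : A → B → C → D → ℝ) :
    ∑ a, ∑ b, ∑ c, ∑ d, f a b c d = ∑ c, ∑ d, ∑ a, ∑ b, f a b c d := by
  have h1 : ∑ a, ∑ b, ∑ c, ∑ d, f a b c d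
      = ∑ p : A × B, ∑ q : C × D, f p.1 p.2 q.1 q.2 := by
    rw [← Fintype.sum_prod_type']
    exact Finset.sum_congr rfl fun p _ => by rw [← Fintype.sum_prod_type']
  have h2 : ∑ c, ∑ d, ∑ a, ∑ b, f a b c d
      = ∑ q : C × D, ∑ p : A × B, f p.1 p.2 q.1 q.2 := by
    rw [← Fintype.sum_prod_type']
    exact Finset.sum_congr rfl fun q _ => by rw [← Fintype.sum_prod_type']
  rw [h1, h2, Finset.sum_comm]

lemma delta_expand {n : ℕ} {Y Z : Type*} [Fintype Y] [Fintype Z]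
    [DecidableEq Y] [DecidableEq Z]
    (h : (Fin n → Y) → (Fin n → Z) → ℝ) (g : Y → Z → ℝ) (i : Fin n) :
    ∑ yn : Fin n → Y, ∑ zn : Fin n → Z, h yn zn * g (yn i) (zn i)
      = ∑ y, ∑ z, (∑ yn : Fin n → Y, ∑ zn : Fin n → Z, h yn zn *
          (if yn i = y then (1:ℝ) else 0) * (if zn i = z then (1:ℝ) else 0)) * g y z := by
  have hrhs : ∀ y z, (∑ yn : Fin n → Y, ∑ zn : Fin n → Z, h yn zn *
          (if yn i = y then (1:ℝ) else 0) * (if zn i = z then (1:ℝ) else 0)) * g y z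
      = ∑ yn : Fin n → Y, ∑ zn : Fin n → Z, h yn zn *
          (if yn i = y then (1:ℝ) else 0) * (if zn i = z then (1:ℝ) else 0) * g y z := by
    intro y z
    rw [Finset.sum_mul]
    exact Finset.sum_congr rfl fun yn _ => by rw [Finset.sum_mul]
  rw [Finset.sum_congr rfl fun y (_ : y ∈ Finset.univ) =>
    Finset.sum_congr rfl fun z (_ : z ∈ Finset.univ) => hrhs y z]
  rw [← sum4_comm (fun yn zn y z => h yn zn *
      (if yn i = y then (1:ℝ) else 0) * (if zn i = z then (1:ℝ) else 0) * g y z)]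
  refine Finset.sum_congr rfl fun yn _ => Finset.sum_congr rfl fun zn _ => ?_
  simp [mul_ite, ite_mul, mul_zero, zero_mul, mul_one, Finset.sum_ite_eq]



lemma MI_convex {Y Z : Type*} [Fintype Y] [Fintype Z] (n : ℕ) (hn : 0 < n)
    (p : Fin n → Y → Z → ℝ) (pY : Y → ℝ) (hpY0 : ∀ y, 0 ≤ pY y)
    (h0 : ∀ i y z, 0 ≤ p i y z) (hA : ∀ i y, ∑ z, p i y z = pY y) :
    MI (fun y z => (1 / (n:ℝ)) * ∑ i, p i y z)
      ≤ (1 / (n:ℝ)) * ∑ i, MI (p i) := by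
  have hn' : (0:ℝ) < (n:ℝ) := by exact_mod_cast hn
  have hnpos : (0:ℝ) < 1 / (n:ℝ) := by positivity
  set c : ℝ := 1 / (n:ℝ) with hc
  -- marginal in y of the mixture
  have hmA : ∀ y, (∑ z, c * ∑ i, p i y z) = pY y := by
    intro y
    rw [← Finset.mul_sum, Finset.sum_comm]
    simp only [hA]
    rw [Finset.sum_const, card_univ, Fintype.card_fin, nsmul_eq_mul, hc]
    field_simp
  have key : ∀ y z,
      (c * ∑ i, p i y z) * Real.log ((c * ∑ i, p i y z) /
          ((∑ z', c * ∑ i, p i y z') * (∑ y', c * ∑ i, p i y' z)))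
      ≤ c * ∑ i, p i y z *
          Real.log (p i y z / (pY y * ∑ y', p i y' z)) := by
    intro y z
    have hb0 : ∀ i : Fin n, (0:ℝ) ≤ ∑ y', p i y' z :=
      fun i => Finset.sum_nonneg fun y' _ => h0 i y' z
    have hls := logSum Finset.univ (fun i : Fin n => c * p i y z)
      (fun i : Fin n => c * (pY y * ∑ y', p i y' z))
      (fun i _ => by have := h0 i y z; positivity)
      (fun i _ => by have := hpY0 y; have := hb0 i; positivity)
      (fun i _ hzero => by
        have h2 : pY y * ∑ y', p i y' z = 0 := by
          rcases mul_eq_zero.mp hzero with h3 | h3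
          · exact absurd h3 (ne_of_gt hnpos)
          · exact h3
        rcases mul_eq_zero.mp h2 with h3 | h3
        · have hle : p i y z ≤ pY y := by
            rw [← hA i y]
            exact Finset.single_le_sum (fun z' _ => h0 i y z') (Finset.mem_univ z)
          show c * p i y z = 0
          rw [le_antisymm (h3 ▸ hle) (h0 i y z), mul_zero]
        · have hle : p i y z ≤ ∑ y', p i y' z :=
            Finset.single_le_sum (fun y' _ => h0 i y' z) (Finset.mem_univ y)
          show c * p i y z = 0
          rw [le_antisymm (h3 ▸ hle) (h0 i y z), mul_zero])
    have hsa : ∑ i, c * p i y z = c * ∑ i, p i y z := (Finset.mul_sum _ _ _).symm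
    have hsb : ∑ i, c * (pY y * ∑ y', p i y' z)
        = (∑ z', c * ∑ i, p i y z') * (∑ y', c * ∑ i, p i y' z) := by
      rw [hmA y]
      have h4 : ∀ y', (c * ∑ i, p i y' z) = ∑ i, c * p i y' z :=
        fun y' => Finset.mul_sum _ _ _
      calc ∑ i, c * (pY y * ∑ y', p i y' z)
          = pY y * ∑ i, c * ∑ y', p i y' z := by
            rw [Finset.mul_sum]
            exact Finset.sum_congr rfl fun i _ => by ring
        _ = pY y * ∑ y', c * ∑ i, p i y' z := by
            congr 1
            simp only [Finset.mul_sum]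
            rw [Finset.sum_comm]
    rw [hsa, hsb] at hls
    refine le_trans hls ?_
    rw [Finset.mul_sum]
    apply Finset.sum_le_sum
    intro i _
    have : c * p i y z / (c * (pY y * ∑ y', p i y' z))
        = p i y z / (pY y * ∑ y', p i y' z) :=
      mul_div_mul_left _ _ (ne_of_gt hnpos)
    rw [this]
    ring_nf
    exact le_refl _
  -- sum over y z
  have hsum : MI (fun y z => c * ∑ i, p i y z)
      ≤ ∑ y, ∑ z, c * ∑ i, p i y z *
          Real.log (p i y z / (pY y * ∑ y', p i y' z)) := by
    unfold MI
    exact Finset.sum_le_sum fun y _ => Finset.sum_le_sum fun z _ => key y z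
  refine le_trans hsum ?_
  have hre : ∑ y, ∑ z, c * ∑ i, p i y z * Real.log (p i y z / (pY y * ∑ y', p i y' z))
      = c * ∑ i, ∑ y, ∑ z, p i y z * Real.log (p i y z / (pY y * ∑ y', p i y' z)) := by
    simp only [← Finset.mul_sum]
    congr 1
    calc ∑ y, ∑ z, ∑ i, p i y z * Real.log (p i y z / (pY y * ∑ y', p i y' z))
        = ∑ y, ∑ i, ∑ z, p i y z * Real.log (p i y z / (pY y * ∑ y', p i y' z)) :=
          Finset.sum_congr rfl fun y _ => Finset.sum_comm
      _ = ∑ i, ∑ y, ∑ z, p i y z * Real.log (p i y z / (pY y * ∑ y', p i y' z)) :=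
          Finset.sum_comm
  rw [hre]
  apply mul_le_mul_of_nonneg_left _ (le_of_lt hnpos)
  apply Finset.sum_le_sum
  intro i _
  unfold MI
  apply le_of_eq
  refine Finset.sum_congr rfl fun y _ => Finset.sum_congr rfl fun z _ => ?_
  rw [hA i y]



lemma MI_tensor {Y Z : Type*} [Fintype Y] [Fintype Z] (n : ℕ) (q : Y → Z → ℝ)
    (h0 : ∀ y z, 0 ≤ q y z) (h1 : ∑ y, ∑ z, q y z = 1) :
    MI (fun (yn : Fin n → Y) (zn : Fin n → Z) => ∏ i, q (yn i) (zn i))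
      = (n : ℝ) * MI q := by
  classical
  unfold MI
  -- marginals
  have hmargA : ∀ yn : Fin n → Y, (∑ zn : Fin n → Z, ∏ i, q (yn i) (zn i))
      = ∏ i, ∑ z, q (yn i) z := fun yn => sum_pi_prod (fun i z => q (yn i) z)
  have hmargB : ∀ zn : Fin n → Z, (∑ yn : Fin n → Y, ∏ i, q (yn i) (zn i))
      = ∏ i, ∑ y, q y (zn i) := fun zn => sum_pi_prod (fun i y => q y (zn i))
  have hpt : ∀ (yn : Fin n → Y) (zn : Fin n → Z),
      (∏ i, q (yn i) (zn i)) * Real.log ((∏ i, q (yn i) (zn i)) /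
          ((∑ zn' : Fin n → Z, ∏ i, q (yn i) (zn' i)) *
           (∑ yn' : Fin n → Y, ∏ i, q (yn' i) (zn i))))
      = ∑ i, (∏ j, q (yn j) (zn j)) *
          Real.log (q (yn i) (zn i) / ((∑ z, q (yn i) z) * (∑ y, q y (zn i)))) := by
    intro yn zn
    rw [hmargA, hmargB]
    by_cases hz : (∏ i, q (yn i) (zn i)) = 0
    · rw [hz]
      simp
    · have hqpos : ∀ i, 0 < q (yn i) (zn i) := by
        intro i
        rcases eq_or_lt_of_le (h0 (yn i) (zn i)) with h | h
        · exact absurd (Finset.prod_eq_zero (Finset.mem_univ i) h.symm) hz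
        · exact h
      have hApos : ∀ i, 0 < ∑ z, q (yn i) z := fun i =>
        lt_of_lt_of_le (hqpos i) (Finset.single_le_sum
          (fun z _ => h0 (yn i) z) (Finset.mem_univ (zn i)))
      have hBpos : ∀ i, 0 < ∑ y, q y (zn i) := fun i =>
        lt_of_lt_of_le (hqpos i) (Finset.single_le_sum
          (fun y _ => h0 y (zn i)) (Finset.mem_univ (yn i)))
      have hratio : (∏ i, q (yn i) (zn i)) /
          ((∏ i, ∑ z, q (yn i) z) * (∏ i, ∑ y, q y (zn i)))
          = ∏ i, q (yn i) (zn i) / ((∑ z, q (yn i) z) * (∑ y, q y (zn i))) := by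
        rw [Finset.prod_div_distrib, ← Finset.prod_mul_distrib]
      rw [hratio, Real.log_prod (fun i _ => by
        have := hqpos i; have := hApos i; have := hBpos i; positivity),
        Finset.mul_sum]
  calc ∑ yn : Fin n → Y, ∑ zn : Fin n → Z,
        (∏ i, q (yn i) (zn i)) * Real.log ((∏ i, q (yn i) (zn i)) /
          ((∑ zn' : Fin n → Z, ∏ i, q (yn i) (zn' i)) *
           (∑ yn' : Fin n → Y, ∏ i, q (yn' i) (zn i))))
      = ∑ yn : Fin n → Y, ∑ zn : Fin n → Z, ∑ i, (∏ j, q (yn j) (zn j)) *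
          Real.log (q (yn i) (zn i) / ((∑ z, q (yn i) z) * (∑ y, q y (zn i)))) :=
        Finset.sum_congr rfl fun yn _ => Finset.sum_congr rfl fun zn _ => hpt yn zn
    _ = ∑ i : Fin n, ∑ yn : Fin n → Y, ∑ zn : Fin n → Z, (∏ j, q (yn j) (zn j)) *
          Real.log (q (yn i) (zn i) / ((∑ z, q (yn i) z) * (∑ y, q y (zn i)))) := by
        exact (Finset.sum_congr rfl fun yn _ => Finset.sum_comm).trans Finset.sum_comm
    _ = ∑ i : Fin n, ∑ y, ∑ z, q y z *
          Real.log (q y z / ((∑ z', q y z') * (∑ y', q y' z))) := by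
        refine Finset.sum_congr rfl fun i _ => ?_
        exact extract2 q (fun y z => Real.log (q y z / ((∑ z', q y z') * (∑ y', q y' z)))) h1 i
    _ = (n : ℝ) * MI q := by
        rw [Finset.sum_const, card_univ, Fintype.card_fin, nsmul_eq_mul]
        rfl




set_option maxHeartbeats 2000000 in
lemma MI_superadd {Y Z : Type*} [Fintype Y] [Fintype Z] [DecidableEq Y] [DecidableEq Z]
    (n : ℕ) (P : (Fin n → Y) → (Fin n → Z) → ℝ) (pY : Y → ℝ)
    (hpY0 : ∀ y, 0 ≤ pY y) (hpY1 : ∑ y, pY y = 1)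
    (hP0 : ∀ yn zn, 0 ≤ P yn zn)
    (hP1 : ∑ yn, ∑ zn, P yn zn = 1)
    (hPY : ∀ yn, (∑ zn, P yn zn) = ∏ i, pY (yn i)) :
    ∑ i : Fin n, MI (fun y z => ∑ yn, ∑ zn, P yn zn *
        (if yn i = y then (1:ℝ) else 0) * (if zn i = z then (1:ℝ) else 0))
      ≤ MI P := by
  classical
  set pair : Fin n → Y → Z → ℝ := fun i y z => ∑ yn, ∑ zn, P yn zn *
      (if yn i = y then (1:ℝ) else 0) * (if zn i = z then (1:ℝ) else 0) with hpair
  set PZ : (Fin n → Z) → ℝ := fun zn => ∑ yn, P yn zn with hPZ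
  set pairB : Fin n → Z → ℝ := fun i z => ∑ y, pair i y z with hpairB
  have hpair0 : ∀ i y z, 0 ≤ pair i y z := by
    intro i y z
    apply Finset.sum_nonneg; intro yn _
    apply Finset.sum_nonneg; intro zn _
    have := hP0 yn zn
    positivity
  have hpairB0 : ∀ i z, 0 ≤ pairB i z := fun i z =>
    Finset.sum_nonneg fun y _ => hpair0 i y z
  have hPZ0 : ∀ zn, 0 ≤ PZ zn := fun zn => Finset.sum_nonneg fun yn _ => hP0 yn zn
  have hdom : ∀ i (yn : Fin n → Y) (zn : Fin n → Z), P yn zn ≤ pair i (yn i) (zn i) := by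
    intro i yn zn
    have h1 : P yn zn = P yn zn * (if yn i = yn i then (1:ℝ) else 0) *
        (if zn i = zn i then (1:ℝ) else 0) := by simp
    rw [h1]
    calc P yn zn * (if yn i = yn i then (1:ℝ) else 0) * (if zn i = zn i then (1:ℝ) else 0)
        ≤ ∑ zn', P yn zn' * (if yn i = yn i then (1:ℝ) else 0) *
            (if zn' i = zn i then (1:ℝ) else 0) :=
          Finset.single_le_sum (f := fun zn' => P yn zn' *
            (if yn i = yn i then (1:ℝ) else 0) * (if zn' i = zn i then (1:ℝ) else 0))
            (fun zn' _ => by have := hP0 yn zn'; positivity) (Finset.mem_univ zn)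
      _ ≤ pair i (yn i) (zn i) :=
          Finset.single_le_sum (f := fun yn' => ∑ zn', P yn' zn' *
            (if yn' i = yn i then (1:ℝ) else 0) * (if zn' i = zn i then (1:ℝ) else 0))
            (fun yn' _ => Finset.sum_nonneg fun zn' _ => by
              have := hP0 yn' zn'; positivity) (Finset.mem_univ yn)
  have hPZdom : ∀ yn zn, P yn zn ≤ PZ zn := fun yn zn =>
    Finset.single_le_sum (fun yn' _ => hP0 yn' zn) (Finset.mem_univ yn)
  have hpairBdom : ∀ i y z, pair i y z ≤ pairB i z := fun i y z =>
    Finset.single_le_sum (fun y' _ => hpair0 i y' z) (Finset.mem_univ y)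
  have hpairA : ∀ i y, (∑ z, pair i y z) = pY y := by
    intro i y
    calc ∑ z, pair i y z
        = ∑ yn, ∑ zn, ∑ z, P yn zn * (if yn i = y then (1:ℝ) else 0) *
            (if zn i = z then (1:ℝ) else 0) :=
          Finset.sum_comm.trans (Finset.sum_congr rfl fun yn _ => Finset.sum_comm)
      _ = ∑ yn, ∑ zn, P yn zn * (if yn i = y then (1:ℝ) else 0) := by
          refine Finset.sum_congr rfl fun yn _ => Finset.sum_congr rfl fun zn _ => ?_
          simp [mul_ite, Finset.sum_ite_eq]
      _ = ∑ yn : Fin n → Y, (∏ j, pY (yn j)) * (if yn i = y then (1:ℝ) else 0) := by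
          refine Finset.sum_congr rfl fun yn _ => ?_
          rw [← Finset.sum_mul, hPY yn]
      _ = ∑ t, pY t * (if t = y then (1:ℝ) else 0) :=
          extract1 pY (fun t => if t = y then (1:ℝ) else 0) hpY1 i
      _ = pY y := by simp
  have hpairdomA : ∀ i y z, pair i y z ≤ pY y := by
    intro i y z
    rw [← hpairA i y]
    exact Finset.single_le_sum (fun z' _ => hpair0 i y z') (Finset.mem_univ z)
  -- the comparison measure b
  set b : (Fin n → Y) → (Fin n → Z) → ℝ := fun yn zn =>
    PZ zn * ∏ i, (pair i (yn i) (zn i) / pairB i (zn i)) with hb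
  have hb0 : ∀ yn zn, 0 ≤ b yn zn := by
    intro yn zn
    apply mul_nonneg (hPZ0 zn)
    exact Finset.prod_nonneg fun i _ =>
      div_nonneg (hpair0 i (yn i) (zn i)) (hpairB0 i (zn i))
  have hbP : ∀ yn zn, b yn zn = 0 → P yn zn = 0 := by
    intro yn zn hzero
    by_contra hP
    have hPpos : 0 < P yn zn := lt_of_le_of_ne (hP0 yn zn) (Ne.symm hP)
    have h2 : 0 < b yn zn := by
      apply mul_pos (lt_of_lt_of_le hPpos (hPZdom yn zn))
      apply Finset.prod_pos
      intro i _
      apply div_pos (lt_of_lt_of_le hPpos (hdom i yn zn))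
      exact lt_of_lt_of_le (lt_of_lt_of_le hPpos (hdom i yn zn)) (hpairBdom i (yn i) (zn i))
    rw [hzero] at h2
    exact lt_irrefl _ h2
  have hbsum : ∑ yn, ∑ zn, b yn zn ≤ 1 := by
    have h1 : ∑ yn, ∑ zn, b yn zn = ∑ zn, ∑ yn, b yn zn := Finset.sum_comm
    rw [h1]
    have h2 : ∀ zn, ∑ yn, b yn zn
        = PZ zn * ∏ i, (∑ y, pair i y (zn i) / pairB i (zn i)) := by
      intro zn
      rw [← Finset.mul_sum]
      congr 1
      exact sum_pi_prod (fun i y => pair i y (zn i) / pairB i (zn i))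
    calc ∑ zn, ∑ yn, b yn zn
        = ∑ zn, PZ zn * ∏ i, (∑ y, pair i y (zn i) / pairB i (zn i)) :=
          Finset.sum_congr rfl fun zn _ => h2 zn
      _ ≤ ∑ zn, PZ zn := by
          apply Finset.sum_le_sum
          intro zn _
          have hle1 : (∏ i, (∑ y, pair i y (zn i) / pairB i (zn i))) ≤ 1 := by
            apply Finset.prod_le_one
            · intro i _
              exact Finset.sum_nonneg fun y _ =>
                div_nonneg (hpair0 i y (zn i)) (hpairB0 i (zn i))
            · intro i _
              rw [← Finset.sum_div]
              exact div_self_le_one _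
          calc PZ zn * ∏ i, (∑ y, pair i y (zn i) / pairB i (zn i))
              ≤ PZ zn * 1 := mul_le_mul_of_nonneg_left hle1 (hPZ0 zn)
            _ = PZ zn := mul_one _
      _ = 1 := by rw [hPZ]; rw [← hP1]; exact Finset.sum_comm
  -- Gibbs inequality for P against b
  have hgibbs : 0 ≤ ∑ yn, ∑ zn, P yn zn * Real.log (P yn zn / b yn zn) := by
    have h := gibbs (Finset.univ : Finset ((Fin n → Y) × (Fin n → Z)))
      (fun p => P p.1 p.2) (fun p => b p.1 p.2)
      (fun p _ => hP0 p.1 p.2) (fun p _ => hb0 p.1 p.2)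
      (fun p _ hz => hbP p.1 p.2 hz)
      (by rw [Fintype.sum_prod_type]; exact hP1)
      (by rw [Fintype.sum_prod_type]; exact hbsum)
    rw [Fintype.sum_prod_type] at h
    exact h
  -- MI of pair i as a sum over the full space
  have hMIpair : ∀ i, MI (pair i) = ∑ yn, ∑ zn, P yn zn *
      Real.log (pair i (yn i) (zn i) / (pY (yn i) * pairB i (zn i))) := by
    intro i
    unfold MI
    have h1 : ∀ y z, pair i y z * Real.log (pair i y z /
        ((∑ b', pair i y b') * (∑ a', pair i a' z)))
        = pair i y z * Real.log (pair i y z / (pY y * pairB i z)) := by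
      intro y z
      rw [hpairA i y]
    rw [Finset.sum_congr rfl fun y _ => Finset.sum_congr rfl fun z _ => h1 y z]
    exact (delta_expand P
      (fun y z => Real.log (pair i y z / (pY y * pairB i z))) i).symm
  -- pointwise identity
  have hId : ∀ yn zn, P yn zn * Real.log (P yn zn /
        ((∑ zn', P yn zn') * (∑ yn', P yn' zn)))
      - ∑ i, P yn zn * Real.log (pair i (yn i) (zn i) / (pY (yn i) * pairB i (zn i)))
      = P yn zn * Real.log (P yn zn / b yn zn) := by
    intro yn zn
    by_cases hz : P yn zn = 0
    · rw [hz]; simp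
    · have hPpos : 0 < P yn zn := lt_of_le_of_ne (hP0 yn zn) (Ne.symm hz)
      have hpairpos : ∀ i, 0 < pair i (yn i) (zn i) :=
        fun i => lt_of_lt_of_le hPpos (hdom i yn zn)
      have hpairBpos : ∀ i, 0 < pairB i (zn i) :=
        fun i => lt_of_lt_of_le (hpairpos i) (hpairBdom i (yn i) (zn i))
      have hpYpos : ∀ i, 0 < pY (yn i) :=
        fun i => lt_of_lt_of_le (hpairpos i) (hpairdomA i (yn i) (zn i))
      have hPZpos : 0 < PZ zn := lt_of_lt_of_le hPpos (hPZdom yn zn)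
      have hPYnpos : 0 < ∑ zn', P yn zn' := by
        rw [hPY yn]; exact Finset.prod_pos fun i _ => hpYpos i
      have hbpos : 0 < b yn zn := by
        apply mul_pos hPZpos
        exact Finset.prod_pos fun i _ => div_pos (hpairpos i) (hpairBpos i)
      have hlogb : Real.log (b yn zn) = Real.log (PZ zn) +
          ∑ i, (Real.log (pair i (yn i) (zn i)) - Real.log (pairB i (zn i))) := by
        rw [hb]
        rw [Real.log_mul (ne_of_gt hPZpos) (ne_of_gt (Finset.prod_pos fun i _ =>
          div_pos (hpairpos i) (hpairBpos i)))]
        congr 1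
        rw [Real.log_prod (fun i _ => ne_of_gt (div_pos (hpairpos i) (hpairBpos i)))]
        exact Finset.sum_congr rfl fun i _ =>
          Real.log_div (ne_of_gt (hpairpos i)) (ne_of_gt (hpairBpos i))
      have hlogPY : Real.log (∑ zn', P yn zn') = ∑ i, Real.log (pY (yn i)) := by
        rw [hPY yn]
        exact Real.log_prod fun i _ => ne_of_gt (hpYpos i)
      rw [← Finset.mul_sum, ← mul_sub]
      congr 1
      rw [Real.log_div (ne_of_gt hPpos) (ne_of_gt hbpos),
          Real.log_div (ne_of_gt hPpos) (ne_of_gt (mul_pos hPYnpos hPZpos)),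
          Real.log_mul (ne_of_gt hPYnpos) (ne_of_gt hPZpos), hlogb, hlogPY]
      have hgi : ∀ i, Real.log (pair i (yn i) (zn i) / (pY (yn i) * pairB i (zn i)))
          = Real.log (pair i (yn i) (zn i)) - Real.log (pY (yn i))
            - Real.log (pairB i (zn i)) := by
        intro i
        rw [Real.log_div (ne_of_gt (hpairpos i))
            (ne_of_gt (mul_pos (hpYpos i) (hpairBpos i))),
          Real.log_mul (ne_of_gt (hpYpos i)) (ne_of_gt (hpairBpos i))]
        ring
      rw [Finset.sum_congr rfl fun i _ => hgi i]
      rw [Finset.sum_sub_distrib, Finset.sum_sub_distrib, Finset.sum_sub_distrib]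
      ring
  -- conclude
  have hfinal : MI P - ∑ i, MI (pair i)
      = ∑ yn, ∑ zn, P yn zn * Real.log (P yn zn / b yn zn) := by
    have h2 : ∑ i, MI (pair i) = ∑ yn, ∑ zn, ∑ i, P yn zn *
        Real.log (pair i (yn i) (zn i) / (pY (yn i) * pairB i (zn i))) := by
      rw [Finset.sum_congr rfl fun i (_ : i ∈ Finset.univ) => hMIpair i]
      exact Finset.sum_comm.trans (Finset.sum_congr rfl fun yn _ => Finset.sum_comm)
    rw [h2]
    unfold MI
    rw [← Finset.sum_sub_distrib]
    rw [Finset.sum_congr rfl fun yn _ => (Finset.sum_sub_distrib _ _).symm]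
    exact Finset.sum_congr rfl fun yn _ => Finset.sum_congr rfl fun zn _ => hId yn zn
  have := hgibbs
  rw [← hfinal] at this
  linarith

end Aux


section Main
open Finset

variable {X Y Xh : Type*} [Fintype X] [Fintype Y] [Fintype Xh]

lemma achieve (n : ℕ) (hn : 0 < n) (pxy : X → Y → ℝ) (hpxy : IsPMF2 pxy)
    (c : X → Xh → ℝ) (hc : ∀ x z, 0 ≤ c x z)
    (K : X → Xh → ℝ) (hK : IsChannel K) :
    ∃ W : (Fin n → X) → (Fin n → Xh) → ℝ, IsChannel W ∧
      MI (fun yn zn => ∑ xn, iidJoint n pxy W yn xn zn) = (n:ℝ) * MI (singleYZ pxy K) ∧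
      costn n pxy W c = singleCost pxy K c := by
  classical
  have hn' : (0:ℝ) < (n:ℝ) := by exact_mod_cast hn
  set pX : X → ℝ := fun x => ∑ y, pxy x y with hpX
  have hpX1 : ∑ x, pX x = 1 := hpxy.2
  have hpX0 : ∀ x, 0 ≤ pX x := fun x => Finset.sum_nonneg fun y _ => hpxy.1 x y
  set q : Y → Xh → ℝ := singleYZ pxy K with hq
  have hq0 : ∀ y z, 0 ≤ q y z := fun y z =>
    Finset.sum_nonneg fun x _ => mul_nonneg (hpxy.1 x y) (hK.1 x z)
  have hq1 : ∑ y, ∑ z, q y z = 1 := by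
    rw [hq]
    unfold singleYZ
    calc ∑ y, ∑ z, ∑ x, pxy x y * K x z
        = ∑ x, ∑ y, ∑ z, pxy x y * K x z :=
          (Finset.sum_congr rfl fun y _ => Finset.sum_comm).trans Finset.sum_comm
      _ = ∑ x, pX x := by
          refine Finset.sum_congr rfl fun x _ => ?_
          rw [hpX]
          simp only [← Finset.mul_sum]
          rw [← Finset.sum_mul, hK.2 x, mul_one]
      _ = 1 := hpX1
  refine ⟨fun xn zn => ∏ i, K (xn i) (zn i), ⟨?_, ?_⟩, ?_, ?_⟩
  · intro xn zn
    exact Finset.prod_nonneg fun i _ => hK.1 (xn i) (zn i)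
  · intro xn
    rw [sum_pi_prod (fun i z => K (xn i) z)]
    exact Finset.prod_eq_one fun i _ => hK.2 (xn i)
  · -- MI equality
    have hjoint : (fun yn zn => ∑ xn, iidJoint n pxy
        (fun xn zn => ∏ i, K (xn i) (zn i)) yn xn zn)
        = fun (yn : Fin n → Y) (zn : Fin n → Xh) => ∏ i, q (yn i) (zn i) := by
      funext yn zn
      unfold iidJoint
      calc ∑ xn : Fin n → X, (∏ i, pxy (xn i) (yn i)) * ∏ i, K (xn i) (zn i)
          = ∑ xn : Fin n → X, ∏ i, (pxy (xn i) (yn i) * K (xn i) (zn i)) := by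
            refine Finset.sum_congr rfl fun xn _ => ?_
            rw [Finset.prod_mul_distrib]
        _ = ∏ i, ∑ x, pxy x (yn i) * K x (zn i) :=
            sum_pi_prod (fun i x => pxy x (yn i) * K x (zn i))
        _ = ∏ i, q (yn i) (zn i) := rfl
    rw [hjoint]
    exact MI_tensor n q hq0 hq1
  · -- cost equality
    unfold costn
    have hm1 : ∑ x, ∑ z, pX x * K x z = 1 := by
      calc ∑ x, ∑ z, pX x * K x z = ∑ x, pX x * ∑ z, K x z := by
            refine Finset.sum_congr rfl fun x _ => (Finset.mul_sum _ _ _).symm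
        _ = ∑ x, pX x := by
            refine Finset.sum_congr rfl fun x _ => by rw [hK.2 x, mul_one]
        _ = 1 := hpX1
    calc ∑ xn : Fin n → X, ∑ zn : Fin n → Xh,
          (∏ i, ∑ y, pxy (xn i) y) * (∏ i, K (xn i) (zn i)) *
            ((1 / (n:ℝ)) * ∑ i, c (xn i) (zn i))
        = ∑ xn : Fin n → X, ∑ zn : Fin n → Xh, ∑ i, (1 / (n:ℝ)) *
            ((∏ j, pX (xn j) * K (xn j) (zn j)) * c (xn i) (zn i)) := by
          refine Finset.sum_congr rfl fun xn _ => Finset.sum_congr rfl fun zn _ => ?_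
          simp only [hpX]
          rw [← Finset.prod_mul_distrib]
          rw [Finset.mul_sum, Finset.mul_sum]
          refine Finset.sum_congr rfl fun i _ => ?_
          ring
      _ = ∑ i : Fin n, ∑ xn : Fin n → X, ∑ zn : Fin n → Xh, (1 / (n:ℝ)) *
            ((∏ j, pX (xn j) * K (xn j) (zn j)) * c (xn i) (zn i)) :=
          (Finset.sum_congr rfl fun xn _ => Finset.sum_comm).trans Finset.sum_comm
      _ = ∑ i : Fin n, (1 / (n:ℝ)) * ∑ x, ∑ z, (pX x * K x z) * c x z := by
          refine Finset.sum_congr rfl fun i _ => ?_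
          simp only [← Finset.mul_sum]
          congr 1
          exact extract2 (fun x z => pX x * K x z) c hm1 i
      _ = singleCost pxy K c := by
          rw [Finset.sum_const, card_univ, Fintype.card_fin, nsmul_eq_mul]
          unfold singleCost
          rw [← mul_assoc]
          rw [mul_one_div, div_self (ne_of_gt hn'), one_mul]


set_option maxHeartbeats 2000000 in
lemma converse [Nonempty Xh] (n : ℕ) (hn : 0 < n) (pxy : X → Y → ℝ) (hpxy : IsPMF2 pxy)
    (c : X → Xh → ℝ) (ε : ℝ)
    (W : (Fin n → X) → (Fin n → Xh) → ℝ) (hW : IsChannel W)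
    (hMIW : MI (fun yn zn => ∑ xn, iidJoint n pxy W yn xn zn) ≤ ε) :
    ∃ K : X → Xh → ℝ, IsChannel K ∧ MI (singleYZ pxy K) ≤ ε / n ∧
      singleCost pxy K c = costn n pxy W c := by
  classical
  have hn' : (0:ℝ) < (n:ℝ) := by exact_mod_cast hn
  set pX : X → ℝ := fun x => ∑ y, pxy x y with hpX
  set pY : Y → ℝ := fun y => ∑ x, pxy x y with hpY
  have hpX1 : ∑ x, pX x = 1 := hpxy.2
  have hpX0 : ∀ x, 0 ≤ pX x := fun x => Finset.sum_nonneg fun y _ => hpxy.1 x y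
  have hpY0 : ∀ y, 0 ≤ pY y := fun y => Finset.sum_nonneg fun x _ => hpxy.1 x y
  have hpY1 : ∑ y, pY y = 1 := by
    rw [hpY, Finset.sum_comm]; exact hpxy.2
  set P : (Fin n → Y) → (Fin n → Xh) → ℝ :=
    fun yn zn => ∑ xn, iidJoint n pxy W yn xn zn with hPdef
  have hP0 : ∀ yn zn, 0 ≤ P yn zn := by
    intro yn zn
    apply Finset.sum_nonneg
    intro xn _
    unfold iidJoint
    exact mul_nonneg (Finset.prod_nonneg fun i _ => hpxy.1 _ _) (hW.1 xn zn)
  have hPY : ∀ yn, (∑ zn, P yn zn) = ∏ i, pY (yn i) := by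
    intro yn
    calc ∑ zn, P yn zn
        = ∑ xn : Fin n → X, ∑ zn : Fin n → Xh,
            (∏ i, pxy (xn i) (yn i)) * W xn zn := Finset.sum_comm
      _ = ∑ xn : Fin n → X, (∏ i, pxy (xn i) (yn i)) := by
          refine Finset.sum_congr rfl fun xn _ => ?_
          rw [← Finset.mul_sum, hW.2 xn, mul_one]
      _ = ∏ i, ∑ x, pxy x (yn i) := sum_pi_prod (fun i x => pxy x (yn i))
      _ = ∏ i, pY (yn i) := rfl
  have hP1 : ∑ yn, ∑ zn, P yn zn = 1 := by
    calc ∑ yn, ∑ zn, P yn zn = ∑ yn : Fin n → Y, ∏ i, pY (yn i) :=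
          Finset.sum_congr rfl fun yn _ => hPY yn
      _ = ∏ i : Fin n, ∑ y, pY y := sum_pi_prod (fun _ y => pY y)
      _ = 1 := by rw [Finset.prod_congr rfl fun (i : Fin n) _ => hpY1]; simp
  -- the induced single-letter channels
  set Ki : Fin n → X → Xh → ℝ := fun i x z => ∑ xn, ∑ zn,
      (∏ j ∈ Finset.univ.erase i, pX (xn j)) * W xn zn *
        (if xn i = x then (1:ℝ) else 0) * (if zn i = z then (1:ℝ) else 0) with hKi
  have hKi0 : ∀ i x z, 0 ≤ Ki i x z := by
    intro i x z
    apply Finset.sum_nonneg; intro xn _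
    apply Finset.sum_nonneg; intro zn _
    have h1 : 0 ≤ ∏ j ∈ Finset.univ.erase i, pX (xn j) :=
      Finset.prod_nonneg fun j _ => hpX0 (xn j)
    have h2 := hW.1 xn zn
    positivity
  have hKirow : ∀ i x, ∑ z, Ki i x z = 1 := by
    intro i x
    calc ∑ z, Ki i x z
        = ∑ xn, ∑ zn, ∑ z, (∏ j ∈ Finset.univ.erase i, pX (xn j)) * W xn zn *
            (if xn i = x then (1:ℝ) else 0) * (if zn i = z then (1:ℝ) else 0) :=
          Finset.sum_comm.trans (Finset.sum_congr rfl fun xn _ => Finset.sum_comm)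
      _ = ∑ xn, ∑ zn, (∏ j ∈ Finset.univ.erase i, pX (xn j)) * W xn zn *
            (if xn i = x then (1:ℝ) else 0) := by
          refine Finset.sum_congr rfl fun xn _ => Finset.sum_congr rfl fun zn _ => ?_
          simp [mul_ite, Finset.sum_ite_eq]
      _ = ∑ xn : Fin n → X, (∏ j ∈ Finset.univ.erase i, pX (xn j)) *
            (if xn i = x then (1:ℝ) else 0) := by
          refine Finset.sum_congr rfl fun xn _ => ?_
          rw [← Finset.sum_mul, ← Finset.mul_sum, hW.2 xn, mul_one]
      _ = 1 := by
          rw [extract_erase pX (fun t => if t = x then (1:ℝ) else 0) i]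
          rw [Finset.prod_congr rfl fun (j : Fin n) _ => hpX1]
          simp [Finset.sum_ite_eq']
  -- pX x * Ki i x z as a delta-sum of the full joint
  have hKiPX : ∀ (i : Fin n) x z, (∑ xn : Fin n → X, ∑ zn : Fin n → Xh,
        ((∏ j, pX (xn j)) * W xn zn) * (if xn i = x then (1:ℝ) else 0) *
          (if zn i = z then (1:ℝ) else 0)) = pX x * Ki i x z := by
    intro i x z
    rw [hKi]
    simp only [Finset.mul_sum]
    refine Finset.sum_congr rfl fun xn _ => Finset.sum_congr rfl fun zn _ => ?_
    by_cases h : xn i = x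
    · simp only [if_pos h]
      rw [← Finset.mul_prod_erase Finset.univ (fun j => pX (xn j)) (Finset.mem_univ i), h]
      ring
    · simp only [if_neg h]
      ring
  have hJ : ∀ (i : Fin n) (F : X → Xh → ℝ),
      (∑ xn : Fin n → X, ∑ zn : Fin n → Xh,
        ((∏ j, pX (xn j)) * W xn zn) * F (xn i) (zn i))
      = ∑ x, ∑ z, (pX x * Ki i x z) * F x z := by
    intro i F
    rw [delta_expand (fun xn zn => (∏ j, pX (xn j)) * W xn zn) F i]
    exact Finset.sum_congr rfl fun x _ => Finset.sum_congr rfl fun z _ => by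
      rw [hKiPX i x z]
  -- cost identity
  have hcost : costn n pxy W c
      = (1 / (n:ℝ)) * ∑ i, ∑ x, ∑ z, (pX x * Ki i x z) * c x z := by
    unfold costn
    calc ∑ xn : Fin n → X, ∑ zn : Fin n → Xh,
          (∏ i, ∑ y, pxy (xn i) y) * W xn zn * ((1 / (n:ℝ)) * ∑ i, c (xn i) (zn i))
        = ∑ xn : Fin n → X, ∑ zn : Fin n → Xh, ∑ i, (1 / (n:ℝ)) *
            (((∏ j, pX (xn j)) * W xn zn) * c (xn i) (zn i)) := by
          refine Finset.sum_congr rfl fun xn _ => Finset.sum_congr rfl fun zn _ => ?_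
          simp only [hpX]
          rw [Finset.mul_sum, Finset.mul_sum]
          refine Finset.sum_congr rfl fun i _ => ?_
          ring
      _ = ∑ i : Fin n, ∑ xn : Fin n → X, ∑ zn : Fin n → Xh, (1 / (n:ℝ)) *
            (((∏ j, pX (xn j)) * W xn zn) * c (xn i) (zn i)) :=
          (Finset.sum_congr rfl fun xn _ => Finset.sum_comm).trans Finset.sum_comm
      _ = (1 / (n:ℝ)) * ∑ i, ∑ x, ∑ z, (pX x * Ki i x z) * c x z := by
          rw [Finset.mul_sum]
          refine Finset.sum_congr rfl fun i _ => ?_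
          simp only [← Finset.mul_sum]
          congr 1
          exact hJ i c
  -- the mixed channel
  set Kbar : X → Xh → ℝ := fun x z => (1 / (n:ℝ)) * ∑ i, Ki i x z with hKbar
  have hKbarCh : IsChannel Kbar := by
    constructor
    · intro x z
      have : 0 ≤ ∑ i, Ki i x z := Finset.sum_nonneg fun i _ => hKi0 i x z
      positivity
    · intro x
      rw [hKbar]
      simp only [← Finset.mul_sum]
      rw [Finset.sum_comm]
      rw [Finset.sum_congr rfl fun (i : Fin n) _ => hKirow i x]
      rw [Finset.sum_const, card_univ, Fintype.card_fin, nsmul_eq_mul, mul_one]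
      rw [one_div, inv_mul_cancel₀ (ne_of_gt hn')]
  -- singleYZ of the mix is the mix of singleYZ
  have hsingle : singleYZ pxy Kbar = fun y z =>
      (1 / (n:ℝ)) * ∑ i, singleYZ pxy (Ki i) y z := by
    funext y z
    unfold singleYZ
    rw [hKbar]
    calc ∑ x, pxy x y * ((1 / (n:ℝ)) * ∑ i, Ki i x z)
        = ∑ x, ∑ i, (1 / (n:ℝ)) * (pxy x y * Ki i x z) := by
          refine Finset.sum_congr rfl fun x _ => ?_
          rw [Finset.mul_sum, Finset.mul_sum]
          exact Finset.sum_congr rfl fun i _ => by ring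
      _ = ∑ i, ∑ x, (1 / (n:ℝ)) * (pxy x y * Ki i x z) := Finset.sum_comm
      _ = (1 / (n:ℝ)) * ∑ i, ∑ x, pxy x y * Ki i x z := by
          simp only [← Finset.mul_sum]
  -- marginal of singleYZ (Ki i) in y
  have hA : ∀ (i : Fin n) y, ∑ z, singleYZ pxy (Ki i) y z = pY y := by
    intro i y
    unfold singleYZ
    rw [Finset.sum_comm]
    calc ∑ x, ∑ z, pxy x y * Ki i x z
        = ∑ x, pxy x y * ∑ z, Ki i x z := by
          refine Finset.sum_congr rfl fun x _ => (Finset.mul_sum _ _ _).symm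
      _ = ∑ x, pxy x y := by
          refine Finset.sum_congr rfl fun x _ => by rw [hKirow i x, mul_one]
      _ = pY y := rfl
  have h0 : ∀ (i : Fin n) y z, 0 ≤ singleYZ pxy (Ki i) y z := by
    intro i y z
    exact Finset.sum_nonneg fun x _ => mul_nonneg (hpxy.1 x y) (hKi0 i x z)
  -- singleYZ pxy (Ki i) equals the (Y_i, Z_i) pair marginal of P
  have hpairKi : ∀ (i : Fin n) y z, singleYZ pxy (Ki i) y z
      = ∑ yn, ∑ zn, P yn zn * (if yn i = y then (1:ℝ) else 0) *
          (if zn i = z then (1:ℝ) else 0) := by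
    intro i y z
    have hLHS : singleYZ pxy (Ki i) y z
        = ∑ xn : Fin n → X, ∑ zn : Fin n → Xh, pxy (xn i) y *
            ((∏ j ∈ Finset.univ.erase i, pX (xn j)) * W xn zn *
              (if zn i = z then (1:ℝ) else 0)) := by
      unfold singleYZ
      rw [hKi]
      simp only [Finset.mul_sum]
      rw [Finset.sum_comm]
      refine Finset.sum_congr rfl fun xn _ => ?_
      rw [Finset.sum_comm]
      refine Finset.sum_congr rfl fun zn _ => ?_
      have hterm : ∀ x, pxy x y * ((∏ j ∈ Finset.univ.erase i, pX (xn j)) * W xn zn *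
            (if xn i = x then (1:ℝ) else 0) * (if zn i = z then (1:ℝ) else 0))
          = if xn i = x then pxy x y * ((∏ j ∈ Finset.univ.erase i, pX (xn j)) *
              W xn zn * (if zn i = z then (1:ℝ) else 0)) else 0 := by
        intro x
        by_cases h : xn i = x
        · simp only [if_pos h]; ring
        · simp only [if_neg h]; ring
      rw [Finset.sum_congr rfl fun x _ => hterm x, Finset.sum_ite_eq]
      simp
    have hRHS : (∑ yn, ∑ zn, P yn zn * (if yn i = y then (1:ℝ) else 0) *
          (if zn i = z then (1:ℝ) else 0))
        = ∑ xn : Fin n → X, ∑ zn : Fin n → Xh,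
            ((∑ t, pxy (xn i) t * (if t = y then (1:ℝ) else 0)) *
              ∏ j ∈ Finset.univ.erase i, (∑ t, pxy (xn j) t)) *
            (W xn zn * (if zn i = z then (1:ℝ) else 0)) := by
      calc ∑ yn, ∑ zn, P yn zn * (if yn i = y then (1:ℝ) else 0) *
              (if zn i = z then (1:ℝ) else 0)
          = ∑ yn : Fin n → Y, ∑ zn : Fin n → Xh, ∑ xn : Fin n → X,
              ((∏ j, pxy (xn j) (yn j)) * W xn zn) * (if yn i = y then (1:ℝ) else 0) *
                (if zn i = z then (1:ℝ) else 0) := by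
            refine Finset.sum_congr rfl fun yn _ => Finset.sum_congr rfl fun zn _ => ?_
            rw [hPdef]
            unfold iidJoint
            rw [Finset.sum_mul, Finset.sum_mul]
        _ = ∑ xn : Fin n → X, ∑ zn : Fin n → Xh, ∑ yn : Fin n → Y,
              ((∏ j, pxy (xn j) (yn j)) * W xn zn) * (if yn i = y then (1:ℝ) else 0) *
                (if zn i = z then (1:ℝ) else 0) := by
            refine ((Finset.sum_congr rfl fun yn _ => Finset.sum_comm).trans
              Finset.sum_comm).trans ?_
            exact Finset.sum_congr rfl fun xn _ => Finset.sum_comm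
        _ = ∑ xn : Fin n → X, ∑ zn : Fin n → Xh,
              (∑ yn : Fin n → Y, (∏ j, pxy (xn j) (yn j)) *
                (if yn i = y then (1:ℝ) else 0)) *
              (W xn zn * (if zn i = z then (1:ℝ) else 0)) := by
            refine Finset.sum_congr rfl fun xn _ => Finset.sum_congr rfl fun zn _ => ?_
            rw [Finset.sum_mul]
            refine Finset.sum_congr rfl fun yn _ => ?_
            ring
        _ = ∑ xn : Fin n → X, ∑ zn : Fin n → Xh,
              ((∑ t, pxy (xn i) t * (if t = y then (1:ℝ) else 0)) *
                ∏ j ∈ Finset.univ.erase i, (∑ t, pxy (xn j) t)) *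
              (W xn zn * (if zn i = z then (1:ℝ) else 0)) := by
            refine Finset.sum_congr rfl fun xn _ => Finset.sum_congr rfl fun zn _ => ?_
            congr 1
            exact extract_pi (fun j t => pxy (xn j) t)
              (fun t => if t = y then (1:ℝ) else 0) i
    rw [hLHS, hRHS]
    refine Finset.sum_congr rfl fun xn _ => Finset.sum_congr rfl fun zn _ => ?_
    have h1 : (∑ t, pxy (xn i) t * (if t = y then (1:ℝ) else 0)) = pxy (xn i) y := by
      simp [mul_ite, Finset.sum_ite_eq']
    rw [h1]
    simp only [hpX]
    ring
  -- MI bounds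
  have hMIi_le : ∑ i : Fin n, MI (singleYZ pxy (Ki i)) ≤ ε := by
    have hsup := MI_superadd n P pY hpY0 hpY1 hP0 hP1 hPY
    have heq : ∑ i : Fin n, MI (singleYZ pxy (Ki i))
        = ∑ i : Fin n, MI (fun y z => ∑ yn, ∑ zn, P yn zn *
            (if yn i = y then (1:ℝ) else 0) * (if zn i = z then (1:ℝ) else 0)) := by
      refine Finset.sum_congr rfl fun i _ => ?_
      exact congrArg MI (funext fun y => funext fun z => hpairKi i y z)
    rw [heq]
    exact le_trans hsup hMIW
  have hMIbar : MI (singleYZ pxy Kbar) ≤ ε / n := by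
    rw [hsingle]
    refine le_trans (MI_convex n hn (fun i => singleYZ pxy (Ki i)) pY hpY0 h0 hA) ?_
    calc (1 / (n:ℝ)) * ∑ i, MI (singleYZ pxy (Ki i))
        ≤ (1 / (n:ℝ)) * ε := by
          apply mul_le_mul_of_nonneg_left hMIi_le (by positivity)
      _ = ε / n := by rw [one_div, inv_mul_eq_div]
  refine ⟨Kbar, hKbarCh, hMIbar, ?_⟩
  rw [hcost]
  unfold singleCost
  calc ∑ x, ∑ z, (∑ y, pxy x y) * Kbar x z * c x z
      = ∑ x, ∑ z, ∑ i, (1 / (n:ℝ)) * ((pX x * Ki i x z) * c x z) := by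
        refine Finset.sum_congr rfl fun x _ => Finset.sum_congr rfl fun z _ => ?_
        rw [hKbar]
        simp only [hpX]
        rw [Finset.mul_sum, Finset.mul_sum, Finset.sum_mul]
        refine Finset.sum_congr rfl fun i _ => ?_
        ring
    _ = ∑ i : Fin n, ∑ x, ∑ z, (1 / (n:ℝ)) * ((pX x * Ki i x z) * c x z) :=
        (Finset.sum_congr rfl fun x _ => Finset.sum_comm).trans Finset.sum_comm
    _ = (1 / (n:ℝ)) * ∑ i, ∑ x, ∑ z, (pX x * Ki i x z) * c x z := by
        simp only [← Finset.mul_sum]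



end Main

theorem stmt4 {X Y Xh : Type*} [Fintype X] [Fintype Y] [Fintype Xh] [Nonempty Xh]
    (n : ℕ) (hn : 0 < n)
    (pxy : X → Y → ℝ) (hpxy : IsPMF2 pxy)
    (c : X → Xh → ℝ) (hc : ∀ x z, 0 ≤ c x z) (ε : ℝ) (hε : 0 ≤ ε) :
    sInf {Γ : ℝ | 0 ≤ Γ ∧ ∃ W : (Fin n → X) → (Fin n → Xh) → ℝ, IsChannel W ∧
        MI (fun yn zn => ∑ xn, iidJoint n pxy W yn xn zn) ≤ ε ∧ costn n pxy W c ≤ Γ}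
      = sInf {v | ∃ K : X → Xh → ℝ, IsChannel K ∧ MI (singleYZ pxy K) ≤ ε / n ∧
        v = singleCost pxy K c} := by
  classical
  have hn' : (0:ℝ) < (n:ℝ) := by exact_mod_cast hn
  set L : Set ℝ := {Γ : ℝ | 0 ≤ Γ ∧ ∃ W : (Fin n → X) → (Fin n → Xh) → ℝ, IsChannel W ∧
      MI (fun yn zn => ∑ xn, iidJoint n pxy W yn xn zn) ≤ ε ∧ costn n pxy W c ≤ Γ}
    with hL
  set R : Set ℝ := {v | ∃ K : X → Xh → ℝ, IsChannel K ∧ MI (singleYZ pxy K) ≤ ε / n ∧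
      v = singleCost pxy K c} with hR
  have hsc0 : ∀ K : X → Xh → ℝ, IsChannel K → 0 ≤ singleCost pxy K c := by
    intro K hK
    apply Finset.sum_nonneg; intro x _
    apply Finset.sum_nonneg; intro z _
    exact mul_nonneg (mul_nonneg (Finset.sum_nonneg fun y _ => hpxy.1 x y)
      (hK.1 x z)) (hc x z)
  have hR0 : ∀ v ∈ R, (0:ℝ) ≤ v := by
    rintro v ⟨K, hK, _, rfl⟩
    exact hsc0 K hK
  have hRL : R ⊆ L := by
    rintro v ⟨K, hK, hMI, rfl⟩
    obtain ⟨W, hWc, hWMI, hWcost⟩ := achieve n hn pxy hpxy c hc K hK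
    refine ⟨hsc0 K hK, W, hWc, ?_, le_of_eq hWcost⟩
    rw [hWMI]
    calc (n:ℝ) * MI (singleYZ pxy K) ≤ (n:ℝ) * (ε / n) :=
          mul_le_mul_of_nonneg_left hMI (le_of_lt hn')
      _ = ε := by field_simp
  have hRne : R.Nonempty := by
    set z0 : Xh := Classical.arbitrary Xh with hz0
    set K0 : X → Xh → ℝ := fun _ z => if z = z0 then 1 else 0 with hK0
    have hch : IsChannel K0 := by
      constructor
      · intro x z; rw [hK0]; dsimp only; split <;> norm_num
      · intro x; rw [hK0]; simp
    have hq : singleYZ pxy K0 = fun y z => if z = z0 then (∑ x, pxy x y) else 0 := by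
      funext y z
      unfold singleYZ
      rw [hK0]
      simp [mul_ite]
    have hMI0 : MI (singleYZ pxy K0) = 0 := by
      rw [hq]
      unfold MI
      dsimp only
      apply Finset.sum_eq_zero; intro y _
      apply Finset.sum_eq_zero; intro z _
      by_cases hz : z = z0
      · subst hz
        simp only [if_pos rfl, if_true, Finset.sum_ite_eq', Finset.mem_univ]
        have h2 : (∑ a' : Y, ∑ x, pxy x a') = 1 := Finset.sum_comm.trans hpxy.2
        rw [h2, mul_one]
        by_cases hy : (∑ x, pxy x y) = 0
        · rw [hy]; simp
        · rw [div_self hy, Real.log_one, mul_zero]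
      · simp [if_neg hz]
    exact ⟨singleCost pxy K0 c, K0, hch, by rw [hMI0]; positivity, rfl⟩
  have hLbdd : BddBelow L := ⟨0, fun Γ hΓ => hΓ.1⟩
  have hRbdd : BddBelow R := ⟨0, hR0⟩
  apply le_antisymm
  · exact csInf_le_csInf hLbdd hRne hRL
  · apply le_csInf (hRne.mono hRL)
    rintro Γ ⟨hΓ0, W, hWc, hWMI, hWcost⟩
    obtain ⟨K, hKc, hKMI, hKcost⟩ := converse n hn pxy hpxy c ε W hWc hWMI
    have hmem : singleCost pxy K c ∈ R := ⟨K, hKc, hKMI, rfl⟩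
    calc sInf R ≤ singleCost pxy K c := csInf_le hRbdd hmem
      _ = costn n pxy W c := hKcost
      _ ≤ Γ := hWcost
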